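/- arXiv:1008.3829 — 3 statements merged into one kernel-verified Lean document; each statement's English description precedes it below -/
import Mathlib

section
/- Let 𝕏 be an agenda over m issues, F an aggregation mechanism for 𝕏 over n voters, j an issue, and ε ≥ 0. If DI^j(F) ≤ ε, then there exists an aggregation mechanism H for 𝕏 over n voters with DI^j(H) = 0 and d(F,H) ≤ 2ε. -/
namespace JudgementAggregation

open Finset

open Classical in
noncomputable def prob {α : Type*} (s : Finset α) (P : α → Prop) : ℝ :=
  ((s.filter P).card : ℝ) / s.card

abbrev Opinion (m : ℕ) := Fin m → Bool
abbrev Profile (m n : ℕ) := Fin n → Opinion m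
abbrev Mechanism (m n : ℕ) := Profile m n → Opinion m

/-- The column of all voters' answers on issue `j`. -/
def col {m n : ℕ} (Y : Profile m n) (j : Fin m) : Fin n → Bool := fun i => Y i j

/-- The set of profiles all of whose rows are consistent opinions (i.e. the set 𝕏^n). -/
def profiles {m : ℕ} (X : Finset (Opinion m)) (n : ℕ) : Finset (Profile m n) :=
  Fintype.piFinset fun _ => X

/-- Inconsistency index: probability (uniform over 𝕏^n) that the aggregated opinion
is inconsistent. -/
noncomputable def IC {m n : ℕ} (X : Finset (Opinion m)) (F : Mechanism m n) : ℝ :=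
  prob (profiles X n) (fun Y => F Y ∉ X)

/-- Distance between mechanisms: probability (uniform over 𝕏^n) of disagreement. -/
noncomputable def mdist {m n : ℕ} (X : Finset (Opinion m)) (F G : Mechanism m n) : ℝ :=
  prob (profiles X n) (fun Y => F Y ≠ G Y)

/-- `F` is independent: on consistent profiles, each issue is aggregated from its own column. -/
def Independent {m n : ℕ} (X : Finset (Opinion m)) (F : Mechanism m n) : Prop :=
  ∃ f : Fin m → (Fin n → Bool) → Bool, ∀ Y ∈ profiles X n, ∀ j, F Y j = f j (col Y j)

open Classical in
/-- Dependency index of issue `j`: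
`E_X [ Pr_Y [ (F X)^j ≠ (F Y)^j | Y^j = X^j ] ]`, everything uniform over 𝕏^n. -/
noncomputable def DIj {m n : ℕ} (X : Finset (Opinion m)) (F : Mechanism m n) (j : Fin m) : ℝ :=
  (∑ Y ∈ profiles X n,
      prob ((profiles X n).filter (fun Z => col Z j = col Y j)) (fun Z => F Z j ≠ F Y j))
    / ((profiles X n).card : ℝ)

/-- Dependency index: the maximum of the issue-wise dependency indices. -/
noncomputable def DI {m n : ℕ} (X : Finset (Opinion m)) (F : Mechanism m n) : ℝ :=
  ⨆ j : Fin m, DIj X F j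

theorem prob_count {α : Type*} (s : Finset α) (P : α → Prop) [DecidablePred P] :
    prob s P = ((s.filter P).card : ℝ) / s.card := by
  unfold prob; congr!

theorem prob_nonneg {α : Type*} (s : Finset α) (P : α → Prop) : 0 ≤ prob s P := by
  unfold prob; positivity

theorem prob_eq_zero {α : Type*} (s : Finset α) (P : α → Prop) (h : ∀ x ∈ s, ¬ P x) :
    prob s P = 0 := by
  classical
  unfold prob
  rw [Finset.filter_false_of_mem h]
  simp

theorem prob_congr {α : Type*} (s : Finset α) (P Q : α → Prop) (h : ∀ x ∈ s, P x ↔ Q x) :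
    prob s P = prob s Q := by
  classical
  unfold prob
  congr 1
  norm_cast
  congr 1
  exact Finset.filter_congr h

/-- `DIj` with the canonical decidability instance on the inner filter. -/
theorem DIj_eq {m n : ℕ} (X : Finset (Opinion m)) (F : Mechanism m n) (j : Fin m) :
    DIj X F j = (∑ Y ∈ profiles X n,
      prob ((profiles X n).filter (fun Z => col Z j = col Y j)) (fun Z => F Z j ≠ F Y j))
    / ((profiles X n).card : ℝ) := by
  unfold DIj; congr!

/-- if `DI^j(F) ≤ ε` then `F` is `2ε`-close to a mechanism with `DI^j = 0`. -/
theorem DIj_le_close (m n : ℕ) (X : Finset (Opinion m)) (hne : X.Nonempty)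
    (F : Mechanism m n) (j : Fin m) (ε : ℝ) (hε : 0 ≤ ε)
    (hDI : DIj X F j ≤ ε) :
    ∃ H : Mechanism m n, DIj X H j = 0 ∧ mdist X F H ≤ 2 * ε := by
  have hSne : (profiles X n).Nonempty := by
    rw [profiles]
    exact Fintype.piFinset_nonempty.mpr fun _ => hne
  have hScard : (0:ℝ) < ((profiles X n).card : ℝ) := by
    exact_mod_cast Finset.card_pos.mpr hSne
  set g : (Fin n → Bool) → Bool := fun c =>
    decide (((profiles X n).filter (fun Z => col Z j = c)).card ≤
      2 * (((profiles X n).filter (fun Z => col Z j = c)).filter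
        (fun Z => F Z j = true)).card) with hgdef
  refine ⟨fun Y i => if i = j then g (col Y j) else F Y i, ?_, ?_⟩
  · -- DIj of the new mechanism on issue j is 0
    rw [DIj_eq, div_eq_zero_iff]
    left
    apply Finset.sum_eq_zero
    intro Y hY
    apply prob_eq_zero
    intro Z hZ
    have hcol : col Z j = col Y j := (Finset.mem_filter.mp hZ).2
    simp [hcol]
  · -- distance bound
    have hkey : ∀ Y ∈ profiles X n, F Y j ≠ g (col Y j) →
        (1:ℝ)/2 ≤ prob ((profiles X n).filter (fun Z => col Z j = col Y j))
          (fun Z => F Z j ≠ F Y j) := by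
      intro Y hY hbad
      set s' := (profiles X n).filter (fun Z => col Z j = col Y j) with hs'
      have hYs' : Y ∈ s' := Finset.mem_filter.mpr ⟨hY, rfl⟩
      have ha : 0 < s'.card := Finset.card_pos.mpr ⟨Y, hYs'⟩
      have hsum : (s'.filter (fun Z => F Z j = true)).card +
          (s'.filter (fun Z => ¬ F Z j = true)).card = s'.card :=
        Finset.card_filter_add_card_filter_not (fun Z => F Z j = true)
      rw [prob_count]
      cases hFY : F Y j with
      | false =>
        -- g (col Y j) = true, so class size ≤ 2 * (# true)
        have hg : s'.card ≤ 2 * (s'.filter (fun Z => F Z j = true)).card := by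
          rw [hFY] at hbad
          have : g (col Y j) = true := by
            cases h : g (col Y j) with
            | false => exact absurd h.symm hbad
            | true => rfl
          rw [hgdef] at this
          exact of_decide_eq_true this
        have hDcard : (s'.filter (fun Z => F Z j ≠ false)) =
            s'.filter (fun Z => F Z j = true) := by
          apply Finset.filter_congr
          intro Z _
          simp
        rw [hDcard, div_le_div_iff₀ (by norm_num) (by exact_mod_cast ha)]
        push_cast
        have : (s'.card : ℝ) ≤ 2 * ((s'.filter (fun Z => F Z j = true)).card : ℝ) := by
          exact_mod_cast hg
        linarith
      | true =>
        -- g (col Y j) = false, so 2 * (# true) < class size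
        have hg : ¬ s'.card ≤ 2 * (s'.filter (fun Z => F Z j = true)).card := by
          rw [hFY] at hbad
          have : g (col Y j) = false := by
            cases h : g (col Y j) with
            | false => rfl
            | true => exact absurd h.symm hbad
          rw [hgdef] at this
          exact of_decide_eq_false this
        have hDcard : (s'.filter (fun Z => F Z j ≠ true)) =
            s'.filter (fun Z => ¬ F Z j = true) := rfl
        have hnat : s'.card ≤ 2 * (s'.filter (fun Z => ¬ F Z j = true)).card := by
          omega
        rw [hDcard, div_le_div_iff₀ (by norm_num) (by exact_mod_cast ha)]
        push_cast
        have : (s'.card : ℝ) ≤ 2 * ((s'.filter (fun Z => ¬ F Z j = true)).card : ℝ) := by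
          exact_mod_cast hnat
        linarith
    set B := (profiles X n).filter (fun Y => F Y j ≠ g (col Y j)) with hB
    have hBsub : B ⊆ profiles X n := Finset.filter_subset _ _
    have hsum1 : ∑ Y ∈ B, (1:ℝ)/2 ≤
        ∑ Y ∈ B, prob ((profiles X n).filter (fun Z => col Z j = col Y j))
          (fun Z => F Z j ≠ F Y j) := by
      apply Finset.sum_le_sum
      intro Y hYB
      have := Finset.mem_filter.mp hYB
      exact hkey Y this.1 this.2
    have hsum2 : ∑ Y ∈ B, prob ((profiles X n).filter (fun Z => col Z j = col Y j))
          (fun Z => F Z j ≠ F Y j) ≤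
        ∑ Y ∈ profiles X n, prob ((profiles X n).filter (fun Z => col Z j = col Y j))
          (fun Z => F Z j ≠ F Y j) :=
      Finset.sum_le_sum_of_subset_of_nonneg hBsub (fun Y _ _ => prob_nonneg _ _)
    have hsumB : ∑ Y ∈ B, (1:ℝ)/2 = (B.card : ℝ) / 2 := by
      rw [Finset.sum_const]
      push_cast
      ring
    have hDIlb : (B.card : ℝ) / 2 / ((profiles X n).card : ℝ) ≤ DIj X F j := by
      rw [DIj_eq]
      gcongr
      rw [← hsumB]
      exact le_trans hsum1 hsum2
    have hmd : mdist X F (fun Y i => if i = j then g (col Y j) else F Y i)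
        = (B.card : ℝ) / ((profiles X n).card : ℝ) := by
      rw [mdist, prob_congr _ _ (fun Y => F Y j ≠ g (col Y j)), prob_count]
      intro Y hY
      constructor
      · intro h hc
        apply h
        funext i
        by_cases hi : i = j
        · subst hi; simp [hc]
        · simp [hi]
      · intro h hc
        apply h
        rw [hc]
        simp
    rw [hmd]
    have h1 : (B.card : ℝ) / 2 / ((profiles X n).card : ℝ) ≤ ε := le_trans hDIlb hDI
    rw [div_le_iff₀ hScard] at h1 ⊢
    linarith

end JudgementAggregation
end

section
/- Let f : {0,1}^n → {0,1} be a binary function and J ⊆ {1,…,n} a coalition. Then d(f, f_J) ≤ Σ_{i∉J} Inf_i(f). -/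
namespace JudgementAggregation

open Finset

/-- Distance between boolean functions: probability of disagreement, uniform on `{0,1}^n`. -/
noncomputable def bdist {n : ℕ} (f g : (Fin n → Bool) → Bool) : ℝ :=
  prob (Finset.univ : Finset (Fin n → Bool)) (fun x => f x ≠ g x)

/-- The influence (Banzhaf index) of voter `i` on `f`. -/
noncomputable def influence {n : ℕ} (i : Fin n) (f : (Fin n → Bool) → Bool) : ℝ :=
  prob (Finset.univ : Finset (Fin n → Bool)) (fun x => f x ≠ f (Function.update x i (!x i)))

open Classical in
/-- The junta function `f_J`: returns 1 iff, conditioned on agreeing with `x` on `J`,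
`f` returns 1 with probability at least 1/2. -/
noncomputable def junta {n : ℕ} (f : (Fin n → Bool) → Bool) (J : Finset (Fin n)) :
    (Fin n → Bool) → Bool :=
  fun x =>
    if (1:ℝ)/2 ≤ prob (Finset.univ.filter (fun y : Fin n → Bool => ∀ i ∈ J, y i = x i))
        (fun y => f y = true) then true else false

open Classical

lemma card_agree {n : ℕ} (S : Finset (Fin n)) (w : Fin n → Bool) :
    (Finset.univ.filter (fun x : Fin n → Bool => ∀ i ∉ S, x i = w i)).card = 2 ^ S.card := by
  have : (Finset.univ.filter (fun x : Fin n → Bool => ∀ i ∉ S, x i = w i)).card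
      = (Finset.univ : Finset ({ i // i ∈ S } → Bool)).card := by
    apply Finset.card_bij' (fun x _ => fun k : {i // i ∈ S} => x k.1)
      (fun g _ => fun i => if h : i ∈ S then g ⟨i, h⟩ else w i)
    · intro a ha; exact Finset.mem_univ _
    · intro g hg
      simp only [Finset.mem_filter, Finset.mem_univ, true_and]
      intro i hi; exact dif_neg hi
    · intro x hx
      simp only [Finset.mem_filter, Finset.mem_univ, true_and] at hx
      funext i
      by_cases h : i ∈ S
      · exact dif_pos h
      · rw [dif_neg h]; exact (hx i h).symm
    · intro g hg
      funext k
      exact dif_pos k.2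
  rw [this]
  simp [Finset.card_univ]

noncomputable def infCount {n : ℕ} (f : (Fin n → Bool) → Bool) (i : Fin n) : ℕ :=
  (Finset.univ.filter (fun x : Fin n → Bool => f x ≠ f (Function.update x i (!x i)))).card

noncomputable def pairSet {n : ℕ} (f : (Fin n → Bool) → Bool) (S : Finset (Fin n)) :
    Finset ((Fin n → Bool) × (Fin n → Bool)) :=
  Finset.univ.filter (fun p => (∀ i ∉ S, p.2 i = p.1 i) ∧ f p.1 ≠ f p.2)

lemma pairSet_bound {n : ℕ} (f : (Fin n → Bool) → Bool) (S : Finset (Fin n)) :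
    2 * (pairSet f S).card ≤ ∑ i ∈ S, 2 ^ S.card * infCount f i := by
  induction S using Finset.induction_on with
  | empty =>
    have : pairSet f ∅ = ∅ := by
      apply Finset.eq_empty_of_forall_notMem
      rintro ⟨x, y⟩ hp
      simp only [pairSet, Finset.mem_filter, Finset.mem_univ, true_and] at hp
      obtain ⟨h1, h2⟩ := hp
      exact h2 (by rw [funext fun i => h1 i (Finset.notMem_empty i)])
    simp [this]
  | @insert j S hj IH =>
    set A := (pairSet f (insert j S)).filter
      (fun p => f p.1 ≠ f (Function.update p.2 j (p.1 j))) with hA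
    set B := (pairSet f (insert j S)).filter
      (fun p => f (Function.update p.2 j (p.1 j)) ≠ f p.2) with hB
    have hsub : pairSet f (insert j S) ⊆ A ∪ B := by
      intro p hp
      have hne := (Finset.mem_filter.mp hp).2.2
      rw [Finset.mem_union, hA, hB, Finset.mem_filter, Finset.mem_filter]
      by_cases h : f p.1 = f (Function.update p.2 j (p.1 j))
      · right; exact ⟨hp, h ▸ hne⟩
      · left; exact ⟨hp, h⟩
    -- bound A
    have hAcard : A.card ≤ 2 * (pairSet f S).card := by
      apply Finset.card_le_mul_card_image_of_maps_to
        (f := fun p : (Fin n → Bool) × (Fin n → Bool) =>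
          (p.1, Function.update p.2 j (p.1 j)))
      · rintro ⟨x, y⟩ ha
        simp only [hA, pairSet, Finset.mem_filter, Finset.mem_univ, true_and] at ha ⊢
        obtain ⟨⟨h1, _⟩, h2⟩ := ha
        refine ⟨?_, h2⟩
        intro i hi
        by_cases hij : i = j
        · subst hij; simp [Function.update_self]
        · rw [Function.update_of_ne hij]
          exact h1 i (by simp [hi, hij])
      · rintro ⟨x, z⟩ hb
        have : {a ∈ A | (a.1, Function.update a.2 j (a.1 j)) = (x, z)} ⊆
            {(x, Function.update z j true), (x, Function.update z j false)} := by
          rintro ⟨x', y⟩ hm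
          simp only [Finset.mem_filter, Prod.mk.injEq] at hm
          obtain ⟨-, h1, h2⟩ := hm
          have hx : x' = x := h1
          have hy : y = Function.update z j (y j) := by
            funext i
            by_cases hij : i = j
            · subst hij; simp [Function.update_self]
            · rw [Function.update_of_ne hij, ← h2, Function.update_of_ne hij]
          subst hx
          rcases Bool.dichotomy (y j) with h | h <;> rw [h] at hy <;>
            simp [hy, Prod.ext_iff]
        calc {a ∈ A | (a.1, Function.update a.2 j (a.1 j)) = (x, z)}.card
            ≤ ({(x, Function.update z j true), (x, Function.update z j false)} :
              Finset ((Fin n → Bool) × (Fin n → Bool))).card := Finset.card_le_card this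
          _ ≤ 2 := Finset.card_insert_le _ _ |>.trans (by simp)
    -- bound B
    have hBcard : B.card ≤ 2 ^ S.card * infCount f j := by
      apply Finset.card_le_mul_card_image_of_maps_to
        (f := fun p : (Fin n → Bool) × (Fin n → Bool) => p.2)
        (t := Finset.univ.filter
          (fun y : Fin n → Bool => f y ≠ f (Function.update y j (!y j))))
      · rintro ⟨x, y⟩ hb
        simp only [hB, pairSet, Finset.mem_filter, Finset.mem_univ, true_and] at hb ⊢
        obtain ⟨⟨h1, -⟩, h2⟩ := hb
        have hxy : x j = !y j := by
          by_contra h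
          have : x j = y j := by
            rcases Bool.dichotomy (y j) with hyj | hyj <;> rw [hyj] at h ⊢ <;>
              simpa using h
          rw [this, Function.update_eq_self] at h2
          exact h2 rfl
        rw [hxy] at h2
        exact fun he => h2 (he ▸ rfl)
      · intro y hy
        have hss : {a ∈ B | a.2 = y} ⊆
            (Finset.univ.filter (fun x : Fin n → Bool =>
              ∀ i ∉ S, x i = Function.update y j (!y j) i)).image (fun x => (x, y)) := by
          rintro ⟨x, y'⟩ hm
          simp only [Finset.mem_filter] at hm
          obtain ⟨hmB, hy'⟩ := hm
          subst hy'
          simp only [hB, pairSet, Finset.mem_filter, Finset.mem_univ, true_and] at hmB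
          obtain ⟨⟨h1, -⟩, h2⟩ := hmB
          have hxy : x j = !y' j := by
            by_contra h
            have : x j = y' j := by
              rcases Bool.dichotomy (y' j) with hyj | hyj <;> rw [hyj] at h ⊢ <;>
                simpa using h
            rw [this, Function.update_eq_self] at h2
            exact h2 rfl
          refine Finset.mem_image.mpr ⟨x, ?_, rfl⟩
          simp only [Finset.mem_filter, Finset.mem_univ, true_and]
          intro i hi
          by_cases hij : i = j
          · subst hij; rw [Function.update_self]; exact hxy
          · rw [Function.update_of_ne hij]
            exact (h1 i (by simp [hi, hij])).symm
        calc {a ∈ B | a.2 = y}.card ≤ _ := Finset.card_le_card hss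
          _ ≤ (Finset.univ.filter (fun x : Fin n → Bool =>
              ∀ i ∉ S, x i = Function.update y j (!y j) i)).card := Finset.card_image_le
          _ = 2 ^ S.card := card_agree S _
    have hmain : (pairSet f (insert j S)).card ≤
        2 * (pairSet f S).card + 2 ^ S.card * infCount f j := by
      calc (pairSet f (insert j S)).card ≤ (A ∪ B).card := Finset.card_le_card hsub
        _ ≤ A.card + B.card := Finset.card_union_le _ _
        _ ≤ _ := by omega
    rw [Finset.sum_insert hj, Finset.card_insert_of_notMem hj]
    have hsum : ∑ i ∈ S, 2 ^ (S.card + 1) * infCount f i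
        = 2 * ∑ i ∈ S, 2 ^ S.card * infCount f i := by
      rw [Finset.mul_sum]
      apply Finset.sum_congr rfl
      intro i _
      ring
    calc 2 * (pairSet f (insert j S)).card
        ≤ 2 * (2 * (pairSet f S).card + 2 ^ S.card * infCount f j) := by omega
      _ = 2 * (2 * (pairSet f S).card) + 2 ^ (S.card + 1) * infCount f j := by ring
      _ ≤ 2 * (∑ i ∈ S, 2 ^ S.card * infCount f i) + 2 ^ (S.card + 1) * infCount f j := by
          omega
      _ = 2 ^ (S.card + 1) * infCount f j + ∑ i ∈ S, 2 ^ (S.card + 1) * infCount f i := by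
          rw [hsum]; ring

/-- the junta function is close to the original function whenever the voters
outside the junta have small total influence. -/
theorem junta_close (n : ℕ) (f : (Fin n → Bool) → Bool) (J : Finset (Fin n)) :
    bdist f (junta f J) ≤ ∑ i ∈ Jᶜ, influence i f := by
  set m := Jᶜ.card with hm
  set bad := Finset.univ.filter (fun x : Fin n → Bool => f x ≠ junta f J x) with hbadset
  -- the key counting fact
  have key : bad.card ≤ ∑ i ∈ Jᶜ, infCount f i := by
    -- fiberwise decomposition of the pair set
    have hfib : (pairSet f Jᶜ).card
        = ∑ x ∈ (Finset.univ : Finset (Fin n → Bool)),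
            {p ∈ pairSet f Jᶜ | p.1 = x}.card :=
      Finset.card_eq_sum_card_fiberwise (fun p _ => Finset.mem_univ p.1)
    -- pointwise bound for bad x
    have hpt : ∀ x ∈ bad, 2 ^ m ≤ 2 * {p ∈ pairSet f Jᶜ | p.1 = x}.card := by
      intro x hx
      rw [hbadset, Finset.mem_filter] at hx
      have hbadx := hx.2
      set C := Finset.univ.filter (fun y : Fin n → Bool => ∀ i ∈ J, y i = x i) with hC
      have hCeq : C = Finset.univ.filter (fun y : Fin n → Bool => ∀ i ∉ Jᶜ, y i = x i) := by
        apply Finset.filter_congr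
        intro y _
        constructor
        · intro h i hi
          exact h i (by simpa using hi)
        · intro h i hi
          exact h i (by simp [hi])
      have hCcard : C.card = 2 ^ m := by rw [hCeq]; exact card_agree Jᶜ x
      set T := C.filter (fun y => f y = true) with hT
      set D := C.filter (fun y => f x ≠ f y) with hD
      -- D injects into the fiber
      have hDfib : D.card ≤ {p ∈ pairSet f Jᶜ | p.1 = x}.card := by
        apply Finset.card_le_card_of_injOn (fun y => (x, y))
        · intro y hy
          rw [Finset.mem_coe, hD, Finset.mem_filter, hCeq, Finset.mem_filter] at hy
          obtain ⟨⟨-, h1⟩, h2⟩ := hy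
          refine Finset.mem_coe.mpr (Finset.mem_filter.mpr ⟨?_, rfl⟩)
          simp only [pairSet, Finset.mem_filter, Finset.mem_univ, true_and]
          exact ⟨h1, h2⟩
        · intro a _ b _ h
          exact congrArg Prod.snd h
      -- probability condition
      have hprob : prob C (fun y => f y = true) = (T.card : ℝ) / (2 ^ m : ℕ) := by
        rw [prob, hCcard, hT]
        congr
      by_cases hc : (1:ℝ)/2 ≤ prob C (fun y => f y = true)
      · -- junta x = true, so f x = false
        have hjx : junta f J x = true := by rw [junta]; rw [if_pos hc]
        have hfx : f x = false := by
          rw [hjx] at hbadx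
          simpa using hbadx
        have hTD : T ⊆ D := by
          intro y hy
          rw [hT, Finset.mem_filter] at hy
          rw [hD, Finset.mem_filter]
          exact ⟨hy.1, by rw [hfx, hy.2]; simp⟩
        have h2T : 2 ^ m ≤ 2 * T.card := by
          rw [hprob] at hc
          have hpos : (0:ℝ) < ((2:ℕ) ^ m : ℕ) := by positivity
          rw [div_le_div_iff₀ (by norm_num) hpos] at hc
          have : (((2 ^ m : ℕ)) : ℝ) ≤ 2 * (T.card : ℝ) := by linarith
          exact_mod_cast this
        calc 2 ^ m ≤ 2 * T.card := h2T
          _ ≤ 2 * D.card := by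
              have := Finset.card_le_card hTD; omega
          _ ≤ 2 * {p ∈ pairSet f Jᶜ | p.1 = x}.card := by omega
      · -- junta x = false, so f x = true
        have hjx : junta f J x = false := by rw [junta]; rw [if_neg hc]
        have hfx : f x = true := by
          rw [hjx] at hbadx
          simpa using hbadx
        set F := C.filter (fun y => ¬(f y = true)) with hF
        have hFT : T.card + F.card = C.card :=
          Finset.card_filter_add_card_filter_not (fun y => f y = true)
        have hFD : F ⊆ D := by
          intro y hy
          rw [hF, Finset.mem_filter] at hy
          rw [hD, Finset.mem_filter]
          refine ⟨hy.1, ?_⟩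
          rw [hfx]
          exact fun h => hy.2 h.symm
        have h2T : 2 * T.card < 2 ^ m := by
          rw [hprob] at hc
          push_neg at hc
          have hpos : (0:ℝ) < ((2:ℕ) ^ m : ℕ) := by positivity
          rw [div_lt_div_iff₀ hpos (by norm_num)] at hc
          have : 2 * (T.card : ℝ) < (((2 ^ m : ℕ)) : ℝ) := by linarith
          exact_mod_cast this
        have hFc := Finset.card_le_card hFD
        calc 2 ^ m ≤ 2 * F.card := by omega
          _ ≤ 2 * {p ∈ pairSet f Jᶜ | p.1 = x}.card := by
              have := hDfib; omega
    -- combine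
    have hstep : bad.card * 2 ^ m ≤ 2 * (pairSet f Jᶜ).card := by
      calc bad.card * 2 ^ m = ∑ _x ∈ bad, 2 ^ m := by
            rw [Finset.sum_const, smul_eq_mul]
        _ ≤ ∑ x ∈ bad, 2 * {p ∈ pairSet f Jᶜ | p.1 = x}.card := Finset.sum_le_sum hpt
        _ ≤ ∑ x ∈ (Finset.univ : Finset (Fin n → Bool)),
              2 * {p ∈ pairSet f Jᶜ | p.1 = x}.card :=
            Finset.sum_le_sum_of_subset (Finset.subset_univ bad)
        _ = 2 * (pairSet f Jᶜ).card := by rw [hfib, Finset.mul_sum]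
    have hps := pairSet_bound f Jᶜ
    have : bad.card * 2 ^ m ≤ 2 ^ m * ∑ i ∈ Jᶜ, infCount f i := by
      calc bad.card * 2 ^ m ≤ 2 * (pairSet f Jᶜ).card := hstep
        _ ≤ ∑ i ∈ Jᶜ, 2 ^ m * infCount f i := hps
        _ = 2 ^ m * ∑ i ∈ Jᶜ, infCount f i := by rw [Finset.mul_sum]
    have hpow : 0 < 2 ^ m := Nat.pow_pos (by norm_num)
    calc bad.card = bad.card * 2 ^ m / 2 ^ m := by
          rw [Nat.mul_div_cancel _ hpow]
      _ ≤ 2 ^ m * (∑ i ∈ Jᶜ, infCount f i) / 2 ^ m := Nat.div_le_div_right this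
      _ = ∑ i ∈ Jᶜ, infCount f i := by rw [Nat.mul_div_cancel_left _ hpow]
  -- convert to reals
  have hcard : ((Finset.univ : Finset (Fin n → Bool)).card : ℝ) = (2:ℝ) ^ n := by
    rw [Finset.card_univ]
    simp [Fintype.card_fun]
  have hbd : bdist f (junta f J) = (bad.card : ℝ) / (2:ℝ) ^ n := by
    rw [bdist, prob, hcard, hbadset]
    congr
  have hinf : ∀ i : Fin n, influence i f = (infCount f i : ℝ) / (2:ℝ) ^ n := by
    intro i
    rw [influence, prob, hcard, infCount]
    congr
  rw [hbd]
  calc (bad.card : ℝ) / (2:ℝ) ^ n ≤ ((∑ i ∈ Jᶜ, infCount f i : ℕ) : ℝ) / (2:ℝ) ^ n := by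
        have hk : ((bad.card : ℕ) : ℝ) ≤ ((∑ i ∈ Jᶜ, infCount f i : ℕ) : ℝ) := by
          exact_mod_cast key
        gcongr
    _ = ∑ i ∈ Jᶜ, influence i f := by
        rw [Nat.cast_sum, Finset.sum_div]
        exact Finset.sum_congr rfl fun i _ => (hinf i).symm


end JudgementAggregation
end

section
/- Let f^1,…,f^m : {0,1}^n → {0,1} be functions each of which depends only on the coordinates in a coalition J ⊆ {1,…,n} (i.e., f^j(x) = f^j(y) whenever x_i = y_i for all i ∈ J). Then there exists a nonnegative integer C such that ĨC(f^1,…,f^m) = C·2^{−m|J|}. -/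
namespace JudgementAggregation

open Finset

/-- Inconsistency index of `⟨f^1,…,f^m,h⟩` for the conjunction agenda over `m` premises:
`Pr_{x^1,…,x^m i.i.d. uniform}[ f^1(x^1) ∧ ⋯ ∧ f^m(x^m) ≠ h(x^1 ∧ ⋯ ∧ x^m) ]`. -/
noncomputable def ICand {m n : ℕ} (f : Fin m → (Fin n → Bool) → Bool)
    (h : (Fin n → Bool) → Bool) : ℝ :=
  prob (Finset.univ : Finset (Fin m → Fin n → Bool)) (fun x =>
    decide (∀ j, f j (x j) = true) ≠ h (fun i => decide (∀ j, x j i = true)))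

/-- `ĨC(f^1,…,f^m)`: minimal inconsistency index over all completions `h`. -/
noncomputable def ICmin {m n : ℕ} (f : Fin m → (Fin n → Bool) → Bool) : ℝ :=
  ⨅ h : (Fin n → Bool) → Bool, ICand f h

section Proof

open Classical

variable {m n : ℕ}

def conjv (x : Fin m → Fin n → Bool) : Fin n → Bool := fun i => decide (∀ j, x j i = true)

def apred (f : Fin m → (Fin n → Bool) → Bool) (x : Fin m → Fin n → Bool) : Bool :=
  decide (∀ j, f j (x j) = true)

variable (J : Finset (Fin n))

def merge (a : {q : Fin m × Fin n // q.2 ∈ J} → Bool)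
    (b : {q : Fin m × Fin n // ¬ q.2 ∈ J} → Bool) : Fin m → Fin n → Bool :=
  fun j i => if h : i ∈ J then a ⟨(j, i), h⟩ else b ⟨(j, i), h⟩

def mergeEquiv :
    (({q : Fin m × Fin n // q.2 ∈ J} → Bool) × ({q : Fin m × Fin n // ¬ q.2 ∈ J} → Bool)) ≃
      (Fin m → Fin n → Bool) :=
  (Equiv.piEquivPiSubtypeProd (fun q : Fin m × Fin n => q.2 ∈ J) (fun _ => Bool)).symm.trans
    (Equiv.curry (Fin m) (Fin n) Bool)

lemma mergeEquiv_apply (a : {q : Fin m × Fin n // q.2 ∈ J} → Bool)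
    (b : {q : Fin m × Fin n // ¬ q.2 ∈ J} → Bool) :
    mergeEquiv J (a, b) = merge J a b := by
  funext j i
  simp [mergeEquiv, merge, Equiv.curry]

def b0 : {q : Fin m × Fin n // ¬ q.2 ∈ J} → Bool := fun _ => true

noncomputable def Scount (f : Fin m → (Fin n → Bool) → Bool) (g : (Fin n → Bool) → Bool) : ℕ :=
  (univ.filter (fun a : {q : Fin m × Fin n // q.2 ∈ J} → Bool =>
    apred f (merge J a (b0 J)) ≠ g (conjv (merge J a (b0 J))))).card

def gmap (h : (Fin n → Bool) → Bool) (b : {q : Fin m × Fin n // ¬ q.2 ∈ J} → Bool) :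
    (Fin n → Bool) → Bool :=
  fun y => h (fun i => if i ∈ J then y i else conjv (merge J (fun _ => true) b) i)

noncomputable def badcard (f : Fin m → (Fin n → Bool) → Bool) (h : (Fin n → Bool) → Bool) : ℕ :=
  (univ.filter (fun x : Fin m → Fin n → Bool => apred f x ≠ h (conjv x))).card

lemma conjv_merge_mem (a : {q : Fin m × Fin n // q.2 ∈ J} → Bool) (b b') {i : Fin n}
    (hi : i ∈ J) : conjv (merge J a b) i = conjv (merge J a b') i := by
  simp [conjv, merge, hi]

lemma conjv_merge_not_mem (a a' : {q : Fin m × Fin n // q.2 ∈ J} → Bool) (b) {i : Fin n}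
    (hi : ¬ i ∈ J) : conjv (merge J a b) i = conjv (merge J a' b) i := by
  simp [conjv, merge, hi]

lemma apred_merge (f : Fin m → (Fin n → Bool) → Bool)
    (hdep : ∀ j, ∀ x y : Fin n → Bool, (∀ i ∈ J, x i = y i) → f j x = f j y)
    (a : {q : Fin m × Fin n // q.2 ∈ J} → Bool) (b b') :
    apred f (merge J a b) = apred f (merge J a b') := by
  simp only [apred]
  rw [decide_eq_decide]
  apply forall_congr'
  intro j
  rw [hdep j (merge J a b j) (merge J a b' j) (fun i hi => by simp [merge, hi])]

lemma key_iff (f : Fin m → (Fin n → Bool) → Bool)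
    (hdep : ∀ j, ∀ x y : Fin n → Bool, (∀ i ∈ J, x i = y i) → f j x = f j y)
    (h : (Fin n → Bool) → Bool) (a : {q : Fin m × Fin n // q.2 ∈ J} → Bool)
    (b : {q : Fin m × Fin n // ¬ q.2 ∈ J} → Bool) :
    (apred f (merge J a b) ≠ h (conjv (merge J a b))) ↔
      (apred f (merge J a (b0 J)) ≠ gmap J h b (conjv (merge J a (b0 J)))) := by
  rw [apred_merge J f hdep a b (b0 J)]
  have : h (conjv (merge J a b)) = gmap J h b (conjv (merge J a (b0 J))) := by
    unfold gmap
    congr 1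
    funext i
    by_cases hi : i ∈ J
    · simp only [hi, if_true]
      exact conjv_merge_mem J a b (b0 J) hi
    · simp only [hi, if_false]
      exact conjv_merge_not_mem J a (fun _ => true) b hi
  rw [this]

lemma badcard_eq_sum (f : Fin m → (Fin n → Bool) → Bool)
    (hdep : ∀ j, ∀ x y : Fin n → Bool, (∀ i ∈ J, x i = y i) → f j x = f j y)
    (h : (Fin n → Bool) → Bool) :
    badcard f h = ∑ b : {q : Fin m × Fin n // ¬ q.2 ∈ J} → Bool, Scount J f (gmap J h b) := by
  unfold badcard Scount
  rw [Finset.card_filter]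
  rw [← Equiv.sum_comp (mergeEquiv J) (fun x => if apred f x ≠ h (conjv x) then 1 else 0)]
  rw [Fintype.sum_prod_type]
  rw [Finset.sum_comm]
  congr 1
  funext b
  rw [Finset.card_filter]
  congr 1
  funext a
  rw [mergeEquiv_apply]
  by_cases hk : apred f (merge J a (b0 J)) ≠ gmap J h b (conjv (merge J a (b0 J)))
  · rw [if_pos hk, if_pos ((key_iff J f hdep h a b).mpr hk)]
  · rw [if_neg hk, if_neg (fun hh => hk ((key_iff J f hdep h a b).mp hh))]

lemma conjv_merge_b0 (a : {q : Fin m × Fin n // q.2 ∈ J} → Bool) {i : Fin n} (hi : ¬ i ∈ J) :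
    conjv (merge J a (b0 J)) i = true := by
  simp [conjv, merge, b0, hi]

/-- For the junta `hstar` built from `g`, each slice count equals `Scount g`. -/
lemma Scount_gmap_hstar (f : Fin m → (Fin n → Bool) → Bool) (g : (Fin n → Bool) → Bool)
    (b : {q : Fin m × Fin n // ¬ q.2 ∈ J} → Bool) :
    Scount J f (gmap J (fun y => g (fun i => if i ∈ J then y i else true)) b) = Scount J f g := by
  unfold Scount
  congr 1
  apply Finset.filter_congr
  intro a _
  have : gmap J (fun y => g (fun i => if i ∈ J then y i else true)) b
      (conjv (merge J a (b0 J))) = g (conjv (merge J a (b0 J))) := by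
    show g (fun i => if i ∈ J then
        (if i ∈ J then conjv (merge J a (b0 J)) i else conjv (merge J (fun _ => true) b) i)
        else true) = g (conjv (merge J a (b0 J)))
    congr 1
    funext i
    by_cases hi : i ∈ J
    · simp [hi]
    · simp only [if_neg hi]
      exact (conjv_merge_b0 J a hi).symm
  rw [this]

lemma card_A : Fintype.card ({q : Fin m × Fin n // q.2 ∈ J} → Bool) = 2 ^ (m * J.card) := by
  rw [Fintype.card_fun, Fintype.card_bool]
  congr 1
  rw [Fintype.card_subtype]
  have : (univ.filter (fun q : Fin m × Fin n => q.2 ∈ J)) = univ ×ˢ J := by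
    ext ⟨j, i⟩
    simp
  rw [this, Finset.card_product, Finset.card_univ, Fintype.card_fin]

lemma card_AB :
    Fintype.card ({q : Fin m × Fin n // q.2 ∈ J} → Bool) *
      Fintype.card ({q : Fin m × Fin n // ¬ q.2 ∈ J} → Bool) = 2 ^ (m * n) := by
  rw [← Fintype.card_prod, Fintype.card_congr (mergeEquiv J)]
  rw [Fintype.card_fun, Fintype.card_fun, Fintype.card_bool, Fintype.card_fin,
    Fintype.card_fin, ← pow_mul, mul_comm n m]

lemma final_calc (a b s : ℕ) (ha : 0 < a) (hb : 0 < b) :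
    ((b * s : ℕ) : ℝ) / ((a : ℝ) * (b : ℝ)) = (s : ℝ) * ((a : ℝ))⁻¹ := by
  push_cast
  rw [mul_comm (a:ℝ), mul_div_mul_left _ _ (by positivity : (b:ℝ) ≠ 0), div_eq_mul_inv]

lemma ICand_eq_badcard (f : Fin m → (Fin n → Bool) → Bool) (h : (Fin n → Bool) → Bool) :
    ICand f h = (badcard f h : ℝ) / 2 ^ (m * n) := by
  unfold ICand prob badcard apred conjv
  congr 1
  · congr!
  rw [Finset.card_univ]
  simp only [Fintype.card_fun, Fintype.card_bool, Fintype.card_fin]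
  push_cast
  rw [← pow_mul, mul_comm n m]

/-- granularity of the minimal inconsistency index for juntas. -/
theorem ICmin_granularity (m n : ℕ) (J : Finset (Fin n))
    (f : Fin m → (Fin n → Bool) → Bool)
    (hdep : ∀ j, ∀ x y : Fin n → Bool, (∀ i ∈ J, x i = y i) → f j x = f j y) :
    ∃ C : ℕ, ICmin f = (C : ℝ) * (2:ℝ) ^ (-((m * J.card : ℕ) : ℤ)) := by
  obtain ⟨g, hg⟩ := Finite.exists_min (fun g : (Fin n → Bool) → Bool => Scount J f g)
  set hstar : (Fin n → Bool) → Bool := fun y => g (fun i => if i ∈ J then y i else true) with hhstar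
  have hstar_card : badcard f hstar =
      Fintype.card ({q : Fin m × Fin n // ¬ q.2 ∈ J} → Bool) * Scount J f g := by
    rw [badcard_eq_sum J f hdep hstar]
    rw [Finset.sum_congr rfl (fun b _ => Scount_gmap_hstar J f g b)]
    rw [Finset.sum_const, Finset.card_univ, smul_eq_mul]
  have hmin : ∀ h, badcard f hstar ≤ badcard f h := by
    intro h
    rw [hstar_card, badcard_eq_sum J f hdep h]
    calc Fintype.card ({q : Fin m × Fin n // ¬ q.2 ∈ J} → Bool) * Scount J f g
        = ∑ _b : ({q : Fin m × Fin n // ¬ q.2 ∈ J} → Bool), Scount J f g := by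
          rw [Finset.sum_const, Finset.card_univ, smul_eq_mul]
      _ ≤ ∑ b : ({q : Fin m × Fin n // ¬ q.2 ∈ J} → Bool), Scount J f (gmap J h b) :=
          Finset.sum_le_sum (fun b _ => hg _)
  have hminR : ∀ h, ICand f hstar ≤ ICand f h := by
    intro h
    rw [ICand_eq_badcard, ICand_eq_badcard]
    gcongr
    exact_mod_cast hmin h
  have hICmin : ICmin f = ICand f hstar :=
    le_antisymm (ciInf_le (Set.Finite.bddBelow (Set.finite_range _)) hstar) (le_ciInf hminR)
  refine ⟨Scount J f g, ?_⟩
  rw [hICmin, ICand_eq_badcard, hstar_card]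
  have hA : (Fintype.card ({q : Fin m × Fin n // q.2 ∈ J} → Bool) : ℝ) = 2 ^ (m * J.card) := by
    rw [card_A J]; norm_num
  have hAB : (Fintype.card ({q : Fin m × Fin n // q.2 ∈ J} → Bool) : ℝ) *
      Fintype.card ({q : Fin m × Fin n // ¬ q.2 ∈ J} → Bool) = 2 ^ (m * n) := by
    rw [← Nat.cast_mul, card_AB J]; push_cast; ring
  rw [zpow_neg, zpow_natCast, ← hA, ← hAB]
  exact final_calc _ _ _ Fintype.card_pos Fintype.card_pos

end Proof

end JudgementAggregation
end
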